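/- arXiv:2605.22965 — 2 statements merged into one kernel-verified Lean document; each statement's English description precedes it below -/
import Mathlib

section
/- Stopped performance-difference identity: under the same setup as the performance-difference identity, for every integer m ≥ 1, with σ_m = τ ∧ m, E[ Σ_{k=0}^{σ_m−1} f(x_k, π(x_k)) ] − V*(x) = E[ Σ_{k=0}^{σ_m−1} A*(x_k, π(x_k)) ] − E[ V*(x_{σ_m}) ]. -/
open MeasureTheory ProbabilityTheory Filter
open scoped ENNReal

open Classical in
/-- Bellman operator of the SSP: `(T V)(x) = inf_{u ∈ U(x)} ( f(x,u) + ∫ V(F(x,u,w)) dμ(w) )`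
for nonterminal `x`, and `(T V)(t) = 0`. -/
noncomputable def bellman {X U W : Type*} [MeasurableSpace W] (μ : Measure W)
    (t : X) (Ua : X → Set U) (f : X → U → ℝ) (F : X → U → W → X)
    (V : X → ℝ) (x : X) : ℝ :=
  if x = t then 0 else ⨅ u : Ua x, (f x (u : U) + ∫ w, V (F x (u : U) w) ∂μ)

/-- Closed-loop trajectory driven by a disturbance sequence `ω : ℕ → W`:
`x₀ = x`, `x_{k+1} = F(x_k, π(x_k), ω_k)`. -/
def traj {X U W : Type*} (F : X → U → W → X) (π : X → U) (x : X) (ω : ℕ → W) : ℕ → X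
  | 0 => x
  | k + 1 => F (traj F π x ω k) (π (traj F π x ω k)) (ω k)

/-- The trajectory as a family of random variables on an abstract sample space `Ω`,
given the disturbance random variables `ξ k : Ω → W`. -/
def trajOn {X U W Ω : Type*} (F : X → U → W → X) (π : X → U) (x : X)
    (ξ : ℕ → Ω → W) (k : ℕ) (ω : Ω) : X :=
  traj F π x (fun i => ξ i ω) k

/-- Hitting time `τ = inf { k ≥ 0 : x_k = t }` of the terminal state (`∞` if never reached),
valued in `ℝ≥0∞`. -/
noncomputable def hitTime {X Ω : Type*} (t : X) (Y : ℕ → Ω → X) (ω : Ω) : ℝ≥0∞ :=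
  ⨅ (k : ℕ) (_ : Y k ω = t), (k : ℝ≥0∞)

/-- Total expected cost `J = E[ Σ_{k=0}^{τ-1} f(x_k, π(x_k)) ]` (in `ℝ≥0∞`; the stage cost
is nonnegative). -/
noncomputable def totalCost {X U Ω : Type*} [MeasurableSpace Ω] (P : Measure Ω)
    (t : X) (f : X → U → ℝ) (π : X → U) (Y : ℕ → Ω → X) : ℝ≥0∞ :=
  ∫⁻ ω, ∑' (k : ℕ), (if (k : ℝ≥0∞) < hitTime t Y ω
    then ENNReal.ofReal (f (Y k ω) (π (Y k ω))) else 0) ∂P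

/-- Expected hitting time `E[τ]` (in `ℝ≥0∞`). -/
noncomputable def expHit {X Ω : Type*} [MeasurableSpace Ω] (P : Measure Ω)
    (t : X) (Y : ℕ → Ω → X) : ℝ≥0∞ :=
  ∫⁻ ω, hitTime t Y ω ∂P

/-- Optimal advantage `A*(x,u) = f(x,u) + ∫ V*(F(x,u,w)) dμ(w) - V*(x)`. -/
noncomputable def advantage {X U W : Type*} [MeasurableSpace W] (μ : Measure W)
    (f : X → U → ℝ) (F : X → U → W → X) (Vstar : X → ℝ) (y : X) (u : U) : ℝ :=
  f y u + ∫ w, Vstar (F y u w) ∂μ - Vstar y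

/-- The stopped index `σ_m = τ ∧ m` as a natural number. -/
noncomputable def stopIdx {X Ω : Type*} (t : X) (Y : ℕ → Ω → X) (m : ℕ) (ω : Ω) : ℕ :=
  sInf {k | k = m ∨ Y k ω = t}

section aux
variable {X U W Ω : Type*}

lemma traj_congr (F : X → U → W → X) (π : X → U) (x : X) (ω ω' : ℕ → W) (k : ℕ)
    (h : ∀ i < k, ω i = ω' i) : traj F π x ω k = traj F π x ω' k := by
  induction k with
  | zero => rfl
  | succ k ih =>
    show F _ _ _ = F _ _ _
    rw [ih (fun i hi => h i (Nat.lt_succ_of_lt hi)), h k (Nat.lt_succ_self k)]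

variable [MeasurableSpace X] [MeasurableSpace U] [MeasurableSpace W]

lemma measurable_traj (F : X → U → W → X) (π : X → U) (x : X)
    (hF : Measurable fun p : X × U × W => F p.1 p.2.1 p.2.2) (hπ : Measurable π) (k : ℕ) :
    Measurable fun ω : ℕ → W => traj F π x ω k := by
  induction k with
  | zero => exact measurable_const
  | succ k ih =>
    show Measurable fun ω : ℕ → W => F (traj F π x ω k) (π (traj F π x ω k)) (ω k)
    exact hF.comp (ih.prodMk ((hπ.comp ih).prodMk (measurable_pi_apply k)))

lemma indep_fubini [MeasurableSpace Ω]
    (P : Measure Ω) [IsProbabilityMeasure P] (μ : Measure W) [IsProbabilityMeasure μ]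
    (h : Ω → X) (ζ : Ω → W) (hh : Measurable h) (hζ : Measurable ζ)
    (hind : IndepFun h ζ P) (hmap : P.map ζ = μ)
    (Φ : X × W → ℝ) (hΦ : Measurable Φ) (C : ℝ) (hC : ∀ p, |Φ p| ≤ C) :
    ∫ ω, Φ (h ω, ζ ω) ∂P = ∫ ω, ∫ w, Φ (h ω, w) ∂μ ∂P := by
  have hjoint : P.map (fun ω => (h ω, ζ ω)) = (P.map h).prod μ := by
    rw [← hmap]
    exact (indepFun_iff_map_prod_eq_prod_map_map hh.aemeasurable hζ.aemeasurable).mp hind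
  have hPh : IsProbabilityMeasure (P.map h) := Measure.isProbabilityMeasure_map hh.aemeasurable
  have hint : Integrable Φ ((P.map h).prod μ) :=
    (integrable_const C).mono' hΦ.aestronglyMeasurable
      (Filter.Eventually.of_forall fun p => by simpa [Real.norm_eq_abs] using hC p)
  have hsm : StronglyMeasurable fun y => ∫ w, Φ (y, w) ∂μ :=
    hΦ.stronglyMeasurable.integral_prod_right'
  calc ∫ ω, Φ (h ω, ζ ω) ∂P
      = ∫ p, Φ p ∂(P.map fun ω => (h ω, ζ ω)) :=
        (integral_map (hh.prodMk hζ).aemeasurable hΦ.aestronglyMeasurable).symm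
    _ = ∫ p, Φ p ∂((P.map h).prod μ) := by rw [hjoint]
    _ = ∫ y, ∫ w, Φ (y, w) ∂μ ∂(P.map h) := integral_prod Φ hint
    _ = ∫ ω, ∫ w, Φ (h ω, w) ∂μ ∂P := integral_map hh.aemeasurable hsm.aestronglyMeasurable

end aux

/-- Stopped performance-difference identity: with `σ_m = τ ∧ m` (`m ≥ 1`),
`E[ Σ_{k=0}^{σ_m-1} f(x_k, π(x_k)) ] - V*(x)
  = E[ Σ_{k=0}^{σ_m-1} A*(x_k, π(x_k)) ] - E[ V*(x_{σ_m}) ]`. -/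
theorem stopped_performance_difference_identity
    {X U W Ω : Type*} [MeasurableSpace X] [MeasurableSingletonClass X]
    [MeasurableSpace U] [MeasurableSpace W] [MeasurableSpace Ω]
    (μ : Measure W) [IsProbabilityMeasure μ] (P : Measure Ω) [IsProbabilityMeasure P]
    (t : X) (u0 : U) (Ua : X → Set U) (F : X → U → W → X) (f : X → U → ℝ)
    -- SSP model: nonempty control sets, nonnegative measurable stage cost, measurable dynamics,
    -- absorbing cost-free terminal state
    (hUne : ∀ y, (Ua y).Nonempty) (hfnn : ∀ y u, 0 ≤ f y u)
    (hFmeas : Measurable fun p : X × U × W => F p.1 p.2.1 p.2.2)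
    (hfmeas : Measurable fun p : X × U => f p.1 p.2)
    (hUt : Ua t = {u0}) (hft : f t u0 = 0) (hFt : ∀ w, F t u0 w = t)
    -- V* : bounded measurable, V*(t)=0, Bellman fixed point, well-defined one-step integrals
    (Vstar : X → ℝ) (hVsmeas : Measurable Vstar) (hVsbdd : ∃ C, ∀ y, |Vstar y| ≤ C)
    (hVst : Vstar t = 0) (hVsfix : ∀ y, Vstar y = bellman μ t Ua f F Vstar y)
    (hVsint : ∀ y u, Integrable (fun w => Vstar (F y u w)) μ)
    (π : X → U) (hπmeas : Measurable π) (hπadm : ∀ y, π y ∈ Ua y)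
    -- i.i.d. disturbance sequence with common law μ on an abstract probability space
    (ξ : ℕ → Ω → W) (hξmeas : ∀ k, Measurable (ξ k))
    (hξindep : iIndepFun ξ P)
    (hξlaw : ∀ k, P.map (ξ k) = μ)
    -- properness of the closed loop from x: τ < ∞ a.s. and J(x) < ∞
    (x : X)
    (hproper_tau : ∀ᵐ ω ∂P, hitTime t (trajOn F π x ξ) ω < ⊤)
    (hproper_J : totalCost P t f π (trajOn F π x ξ) < ⊤)
    (m : ℕ) (hm : 1 ≤ m) :
    (∫ ω, (∑ k ∈ Finset.range (stopIdx t (trajOn F π x ξ) m ω),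
        f (trajOn F π x ξ k ω) (π (trajOn F π x ξ k ω))) ∂P) - Vstar x
      = (∫ ω, (∑ k ∈ Finset.range (stopIdx t (trajOn F π x ξ) m ω),
          advantage μ f F Vstar (trajOn F π x ξ k ω) (π (trajOn F π x ξ k ω))) ∂P)
        - ∫ ω, Vstar (trajOn F π x ξ (stopIdx t (trajOn F π x ξ) m ω) ω) ∂P := by
  classical
  obtain ⟨C, hC⟩ := hVsbdd
  have hC0 : 0 ≤ C := le_trans (abs_nonneg _) (hC x)
  set Y : ℕ → Ω → X := trajOn F π x ξ with hYdef
  set σ : Ω → ℕ := stopIdx t Y m with hσdef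
  have hY0 : ∀ ω, Y 0 ω = x := fun ω => rfl
  have hYsucc : ∀ k ω, Y (k + 1) ω = F (Y k ω) (π (Y k ω)) (ξ k ω) := fun k ω => rfl
  have hYmeas : ∀ k, Measurable (Y k) := fun k =>
    (measurable_traj F π x hFmeas hπmeas k).comp (measurable_pi_lambda _ fun i => hξmeas i)
  have hπt : π t = u0 := by have h := hπadm t; rw [hUt] at h; exact h
  have habs : ∀ ω j k, j ≤ k → Y j ω = t → Y k ω = t := by
    intro ω j k hjk hj
    induction k, hjk using Nat.le_induction with
    | base => exact hj
    | succ k hk ih => rw [hYsucc k ω, ih, hπt]; exact hFt _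
  have hσ_le : ∀ ω, σ ω ≤ m := fun ω => Nat.sInf_le (Or.inl rfl)
  have hσ_mem : ∀ ω, σ ω = m ∨ Y (σ ω) ω = t := by
    intro ω
    have h : sInf {k | k = m ∨ Y k ω = t} ∈ {k | k = m ∨ Y k ω = t} :=
      Nat.sInf_mem ⟨m, Or.inl rfl⟩
    exact h
  have hlt : ∀ ω k, k < σ ω ↔ (k < m ∧ ¬ Y k ω = t) := by
    intro ω k
    constructor
    · intro hk
      have h1 : k ∉ {k | k = m ∨ Y k ω = t} := Nat.notMem_of_lt_sInf hk
      simp only [Set.mem_setOf_eq, not_or] at h1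
      exact ⟨lt_of_lt_of_le hk (hσ_le ω), h1.2⟩
    · rintro ⟨hkm, hkt⟩
      by_contra hcon
      push_neg at hcon
      rcases hσ_mem ω with h | h
      · omega
      · exact hkt (habs ω (σ ω) k hcon h)
  -- measurability of σ
  have hA : ∀ j, MeasurableSet {ω | j = m ∨ Y j ω = t} := by
    intro j
    by_cases hj : j = m
    · simp only [hj, true_or]; exact MeasurableSet.univ
    · simp only [hj, false_or]; exact hYmeas j (measurableSet_singleton t)
  have hσmeas : Measurable σ := by
    refine measurable_to_countable' fun j => ?_
    have hpre : σ ⁻¹' {j}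
        = {ω | j = m ∨ Y j ω = t} ∩ ⋂ (i : ℕ) (_ : i < j), {ω | i = m ∨ Y i ω = t}ᶜ := by
      ext ω
      simp only [Set.mem_preimage, Set.mem_singleton_iff, Set.mem_inter_iff, Set.mem_iInter,
        Set.mem_compl_iff, Set.mem_setOf_eq]
      constructor
      · rintro rfl
        have h : sInf {k | k = m ∨ Y k ω = t} ∈ {k | k = m ∨ Y k ω = t} :=
          Nat.sInf_mem ⟨m, Or.inl rfl⟩
        exact ⟨h, fun i hi => Nat.notMem_of_lt_sInf hi⟩
      · rintro ⟨h1, h2⟩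
        refine le_antisymm (Nat.sInf_le h1) ?_
        refine le_csInf ⟨m, Or.inl rfl⟩ fun b hb => ?_
        by_contra hbj
        exact h2 b (by omega) hb
    rw [hpre]
    exact (hA j).inter
      (MeasurableSet.iInter fun i => MeasurableSet.iInter fun _ => (hA i).compl)
  have hklt : ∀ k, MeasurableSet {ω | k < σ ω} := fun k =>
    hσmeas (Set.to_countable {n | k < n}).measurableSet
  -- the one-step expected value function G
  set G : X → ℝ := fun y => ∫ w, Vstar (F y (π y) w) ∂μ with hGdef
  have hΨ : Measurable fun p : X × W => Vstar (F p.1 (π p.1) p.2) :=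
    hVsmeas.comp (hFmeas.comp
      (measurable_fst.prodMk ((hπmeas.comp measurable_fst).prodMk measurable_snd)))
  have hGmeas : Measurable G := hΨ.stronglyMeasurable.integral_prod_right'.measurable
  have hGbdd : ∀ y, |G y| ≤ C := by
    intro y
    rw [← Real.norm_eq_abs]
    calc ‖∫ w, Vstar (F y (π y) w) ∂μ‖ ≤ C * (μ Set.univ).toReal :=
          norm_integral_le_of_norm_le_const
            (Filter.Eventually.of_forall fun w => by
              simpa [Real.norm_eq_abs] using hC (F y (π y) w))
      _ = C := by simp
  have hadv : ∀ k (ω : Ω), advantage μ f F Vstar (Y k ω) (π (Y k ω))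
      = f (Y k ω) (π (Y k ω)) + (G (Y k ω) - Vstar (Y k ω)) := by
    intro k ω
    simp only [advantage, hGdef]
    ring
  -- generic stopped-sum rewriting
  have hsum : ∀ (g : ℕ → ℝ) (n : ℕ), n ≤ m →
      ∑ k ∈ Finset.range n, g k = ∑ k ∈ Finset.range m, if k < n then g k else 0 := by
    intro g n hn
    rw [← Finset.sum_filter]
    congr 1
    ext k
    simp only [Finset.mem_filter, Finset.mem_range]
    omega
  -- k < σ implies k < hitTime
  have hhit : ∀ (ω : Ω) k, k < σ ω → (k : ℝ≥0∞) < hitTime t Y ω := by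
    intro ω k hk
    have hkt : ¬ Y k ω = t := ((hlt ω k).1 hk).2
    have hle : ((k : ℝ≥0∞) + 1) ≤ hitTime t Y ω := by
      simp only [hitTime]
      refine le_iInf fun j => le_iInf fun hj => ?_
      have hjk : k < j := by
        by_contra h
        push_neg at h
        exact hkt (habs ω j k h hj)
      calc (k : ℝ≥0∞) + 1 = ((k + 1 : ℕ) : ℝ≥0∞) := by push_cast; ring
        _ ≤ (j : ℝ≥0∞) := by exact_mod_cast Nat.cast_le.mpr hjk
    calc (k : ℝ≥0∞) < (k : ℝ≥0∞) + 1 :=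
          ENNReal.lt_add_right (by simp) one_ne_zero
      _ ≤ _ := hle
  -- integrability of the stage-cost terms
  have hgfmeas : ∀ k, Measurable fun ω => f (Y k ω) (π (Y k ω)) := fun k =>
    hfmeas.comp ((hYmeas k).prodMk (hπmeas.comp (hYmeas k)))
  have hiterm_f : ∀ k, Integrable (fun ω => if k < σ ω then f (Y k ω) (π (Y k ω)) else 0) P := by
    intro k
    have hmeas : Measurable fun ω => if k < σ ω then f (Y k ω) (π (Y k ω)) else 0 :=
      Measurable.ite (hklt k) (hgfmeas k) measurable_const
    refine ⟨hmeas.aestronglyMeasurable, ?_⟩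
    have hb : ∀ ω, (‖if k < σ ω then f (Y k ω) (π (Y k ω)) else 0‖₊ : ℝ≥0∞)
        ≤ ∑' (j : ℕ), (if (j : ℝ≥0∞) < hitTime t Y ω
            then ENNReal.ofReal (f (Y j ω) (π (Y j ω))) else 0) := by
      intro ω
      by_cases hk : k < σ ω
      · rw [if_pos hk, ← enorm_eq_nnnorm, Real.enorm_eq_ofReal (hfnn _ _)]
        have h1 : ENNReal.ofReal (f (Y k ω) (π (Y k ω)))
            = (if (k : ℝ≥0∞) < hitTime t Y ω
                then ENNReal.ofReal (f (Y k ω) (π (Y k ω))) else 0) := by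
          rw [if_pos (hhit ω k hk)]
        rw [h1]
        exact ENNReal.le_tsum k
      · simp [hk]
    have hJ := hproper_J
    unfold totalCost at hJ
    exact lt_of_le_of_lt (lintegral_mono hb) hJ
  -- integrability of bounded terms
  have hGVmeas : ∀ k, Measurable fun ω => G (Y k ω) - Vstar (Y k ω) := fun k =>
    (hGmeas.comp (hYmeas k)).sub (hVsmeas.comp (hYmeas k))
  have hbdd_int : ∀ (g : Ω → ℝ), Measurable g → (∀ ω, |g ω| ≤ C + C) →
      ∀ k, Integrable (fun ω => if k < σ ω then g ω else 0) P := by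
    intro g hg hgb k
    refine (integrable_const (C + C)).mono'
      (Measurable.ite (hklt k) hg measurable_const).aestronglyMeasurable
      (Filter.Eventually.of_forall fun ω => ?_)
    by_cases hk : k < σ ω
    · simpa [hk, Real.norm_eq_abs] using hgb ω
    · simp [hk, Real.norm_eq_abs]
      linarith
  have hGVint : ∀ k, Integrable (fun ω => if k < σ ω then G (Y k ω) - Vstar (Y k ω) else 0) P := by
    intro k
    refine hbdd_int _ (hGVmeas k) (fun ω => ?_) k
    calc |G (Y k ω) - Vstar (Y k ω)| ≤ |G (Y k ω)| + |Vstar (Y k ω)| := abs_sub _ _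
      _ ≤ C + C := add_le_add (hGbdd _) (hC _)
  have hDint : ∀ k, Integrable
      (fun ω => if k < σ ω then G (Y k ω) - Vstar (Y (k + 1) ω) else 0) P := by
    intro k
    refine hbdd_int _ ((hGmeas.comp (hYmeas k)).sub (hVsmeas.comp (hYmeas (k + 1))))
      (fun ω => ?_) k
    calc |G (Y k ω) - Vstar (Y (k + 1) ω)| ≤ |G (Y k ω)| + |Vstar (Y (k + 1) ω)| := abs_sub _ _
      _ ≤ C + C := add_le_add (hGbdd _) (hC _)
  -- V*(Y_σ) is bounded measurable
  have hVσmeas : Measurable fun ω => Vstar (Y (σ ω) ω) := by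
    have hrepr : (fun ω => Vstar (Y (σ ω) ω))
        = fun ω => ∑ j ∈ Finset.range (m + 1), if σ ω = j then Vstar (Y j ω) else 0 := by
      funext ω
      rw [Finset.sum_ite_eq (Finset.range (m + 1)) (σ ω) (fun j => Vstar (Y j ω))]
      rw [if_pos (Finset.mem_range.mpr (Nat.lt_succ_of_le (hσ_le ω)))]
    rw [hrepr]
    refine Finset.measurable_sum _ fun j _ => Measurable.ite ?_ (hVsmeas.comp (hYmeas j))
      measurable_const
    exact hσmeas (measurableSet_singleton j)
  have hVσint : Integrable (fun ω => Vstar (Y (σ ω) ω)) P :=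
    (integrable_const C).mono' hVσmeas.aestronglyMeasurable
      (Filter.Eventually.of_forall fun ω => by simpa [Real.norm_eq_abs] using hC _)
  -- independence of Y k and ξ k
  have hWne : Nonempty W := by
    by_contra h
    rw [not_nonempty_iff] at h
    have h1 : (Set.univ : Set W) = ∅ := Set.univ_eq_empty_iff.mpr h
    have h2 := measure_univ (μ := μ)
    rw [h1, measure_empty] at h2
    exact one_ne_zero h2.symm
  obtain ⟨w0⟩ := hWne
  have hind : ∀ k, IndepFun (Y k) (ξ k) P := by
    intro k
    set φ : (↥(Finset.range k) → W) → X :=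
      fun v => traj F π x (fun i => if hi : i ∈ Finset.range k then v ⟨i, hi⟩ else w0) k with hφ
    have hφmeas : Measurable φ := by
      refine (measurable_traj F π x hFmeas hπmeas k).comp
        (measurable_pi_lambda _ fun i => ?_)
      by_cases hi : i ∈ Finset.range k
      · simp only [hi, dif_pos]
        exact measurable_pi_apply _
      · simp only [hi, dif_neg, not_false_iff]
        exact measurable_const
    have hψmeas : Measurable fun v : ↥({k} : Finset ℕ) → W =>
        v ⟨k, Finset.mem_singleton_self k⟩ := measurable_pi_apply _
    have h0 := hξindep.indepFun_finset (Finset.range k) {k}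
      (Finset.disjoint_singleton_right.mpr (by simp)) hξmeas
    have h1 := h0.comp hφmeas hψmeas
    have e1 : Y k = φ ∘ (fun a (i : ↥(Finset.range k)) => ξ (i : ℕ) a) := by
      funext ω
      refine traj_congr F π x _ _ k fun i hi => ?_
      simp [Finset.mem_range.mpr hi]
    have e2 : ξ k = (fun v : ↥({k} : Finset ℕ) → W => v ⟨k, Finset.mem_singleton_self k⟩)
        ∘ (fun a (i : ↥({k} : Finset ℕ)) => ξ (i : ℕ) a) := rfl
    rw [e1, e2]
    exact h1
  -- the martingale step
  have key : ∀ k, k < m →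
      ∫ ω, (if Y k ω = t then 0 else G (Y k ω) - Vstar (Y (k + 1) ω)) ∂P = 0 := by
    intro k hk
    set Φ : X × W → ℝ :=
      fun p => if p.1 = t then 0 else G p.1 - Vstar (F p.1 (π p.1) p.2) with hΦdef
    have hΦmeas : Measurable Φ := by
      refine Measurable.ite ?_ measurable_const ((hGmeas.comp measurable_fst).sub hΨ)
      exact (measurableSet_singleton t).preimage measurable_fst
    have hΦbdd : ∀ p, |Φ p| ≤ C + C := by
      intro p
      rw [hΦdef]
      by_cases hp : p.1 = t
      · simp [hp]; linarith
      · simp only [hp, if_false]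
        calc |G p.1 - Vstar (F p.1 (π p.1) p.2)|
            ≤ |G p.1| + |Vstar (F p.1 (π p.1) p.2)| := abs_sub _ _
          _ ≤ C + C := add_le_add (hGbdd _) (hC _)
    have hmart := indep_fubini P μ (Y k) (ξ k) (hYmeas k) (hξmeas k) (hind k) (hξlaw k)
      Φ hΦmeas (C + C) hΦbdd
    have hinner : ∀ y, ∫ w, Φ (y, w) ∂μ = 0 := by
      intro y
      by_cases hy : y = t
      · simp [hΦdef, hy]
      · simp only [hΦdef, hy, if_false]
        rw [integral_sub (integrable_const _) (hVsint y (π y)), integral_const]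
        simp [hGdef]
    have heq : (fun ω => if Y k ω = t then 0 else G (Y k ω) - Vstar (Y (k + 1) ω))
        = fun ω => Φ (Y k ω, ξ k ω) := by
      funext ω
      rw [hΦdef, hYsucc k ω]
    rw [heq, hmart]
    simp [hinner]
  -- key in the indicator form
  have key2 : ∀ k, k < m →
      ∫ ω, (if k < σ ω then G (Y k ω) - Vstar (Y (k + 1) ω) else 0) ∂P = 0 := by
    intro k hk
    have heq : (fun ω => if k < σ ω then G (Y k ω) - Vstar (Y (k + 1) ω) else 0)
        = fun ω => if Y k ω = t then 0 else G (Y k ω) - Vstar (Y (k + 1) ω) := by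
      funext ω
      by_cases hy : Y k ω = t
      · rw [if_pos hy, if_neg (by rw [hlt]; tauto)]
      · rw [if_neg hy, if_pos (by rw [hlt]; exact ⟨hk, hy⟩)]
    rw [heq]
    exact key k hk
  -- telescoping identity (pointwise)
  have htel : ∀ ω, (∑ k ∈ Finset.range m, if k < σ ω then G (Y k ω) - Vstar (Y k ω) else 0)
      = (∑ k ∈ Finset.range m, if k < σ ω then G (Y k ω) - Vstar (Y (k + 1) ω) else 0)
        + Vstar (Y (σ ω) ω) - Vstar x := by
    intro ω
    rw [← hsum (fun k => G (Y k ω) - Vstar (Y k ω)) (σ ω) (hσ_le ω),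
      ← hsum (fun k => G (Y k ω) - Vstar (Y (k + 1) ω)) (σ ω) (hσ_le ω)]
    have h2 := Finset.sum_range_sub (fun j => Vstar (Y j ω)) (σ ω)
    have h3 : (∑ k ∈ Finset.range (σ ω), (G (Y k ω) - Vstar (Y k ω)))
        - ∑ k ∈ Finset.range (σ ω), (G (Y k ω) - Vstar (Y (k + 1) ω))
        = ∑ k ∈ Finset.range (σ ω), (Vstar (Y (k + 1) ω) - Vstar (Y k ω)) := by
      rw [← Finset.sum_sub_distrib]
      exact Finset.sum_congr rfl fun k _ => by ring
    rw [hY0 ω] at h2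
    linarith [h2, h3]
  -- integral of the martingale sum vanishes
  have hDsum_int : Integrable
      (fun ω => ∑ k ∈ Finset.range m, if k < σ ω then G (Y k ω) - Vstar (Y (k + 1) ω) else 0) P :=
    integrable_finset_sum _ fun k _ => hDint k
  have hGVsum_int : Integrable
      (fun ω => ∑ k ∈ Finset.range m, if k < σ ω then G (Y k ω) - Vstar (Y k ω) else 0) P :=
    integrable_finset_sum _ fun k _ => hGVint k
  have hgfsum_int : Integrable
      (fun ω => ∑ k ∈ Finset.range m, if k < σ ω then f (Y k ω) (π (Y k ω)) else 0) P :=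
    integrable_finset_sum _ fun k _ => hiterm_f k
  have hIDsum : ∫ ω, (∑ k ∈ Finset.range m,
      if k < σ ω then G (Y k ω) - Vstar (Y (k + 1) ω) else 0) ∂P = 0 := by
    rw [integral_finset_sum _ fun k _ => hDint k]
    exact Finset.sum_eq_zero fun k hk => key2 k (Finset.mem_range.mp hk)
  -- integral of the GV sum
  have hIGV : ∫ ω, (∑ k ∈ Finset.range m,
      if k < σ ω then G (Y k ω) - Vstar (Y k ω) else 0) ∂P
      = (∫ ω, Vstar (Y (σ ω) ω) ∂P) - Vstar x := by
    have hfun : (fun ω => ∑ k ∈ Finset.range m, if k < σ ω then G (Y k ω) - Vstar (Y k ω) else 0)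
        = fun ω => ((∑ k ∈ Finset.range m, if k < σ ω then G (Y k ω) - Vstar (Y (k + 1) ω) else 0)
          + Vstar (Y (σ ω) ω)) - Vstar x := by
      funext ω
      rw [htel ω]
    have hsum_int2 : Integrable (fun ω =>
        (∑ k ∈ Finset.range m, if k < σ ω then G (Y k ω) - Vstar (Y (k + 1) ω) else 0)
          + Vstar (Y (σ ω) ω)) P := hDsum_int.add hVσint
    rw [hfun, integral_sub hsum_int2 (integrable_const _),
      integral_add hDsum_int hVσint, hIDsum, integral_const]
    simp
  -- rewrite the goal
  have hrw1 : (fun ω => ∑ k ∈ Finset.range (σ ω), f (Y k ω) (π (Y k ω)))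
      = fun ω => ∑ k ∈ Finset.range m, if k < σ ω then f (Y k ω) (π (Y k ω)) else 0 :=
    funext fun ω => hsum (fun k => f (Y k ω) (π (Y k ω))) (σ ω) (hσ_le ω)
  have hrw2 : (fun ω => ∑ k ∈ Finset.range (σ ω),
        advantage μ f F Vstar (Y k ω) (π (Y k ω)))
      = fun ω => ∑ k ∈ Finset.range m,
        if k < σ ω then advantage μ f F Vstar (Y k ω) (π (Y k ω)) else 0 :=
    funext fun ω => hsum (fun k => advantage μ f F Vstar (Y k ω) (π (Y k ω))) (σ ω) (hσ_le ω)
  have hsplitfun : (fun ω => ∑ k ∈ Finset.range m,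
        if k < σ ω then advantage μ f F Vstar (Y k ω) (π (Y k ω)) else 0)
      = fun ω => (∑ k ∈ Finset.range m, if k < σ ω then f (Y k ω) (π (Y k ω)) else 0)
        + (∑ k ∈ Finset.range m, if k < σ ω then G (Y k ω) - Vstar (Y k ω) else 0) := by
    funext ω
    rw [← Finset.sum_add_distrib]
    refine Finset.sum_congr rfl fun k _ => ?_
    by_cases hk : k < σ ω
    · simp only [hk, if_true]
      exact hadv k ω
    · simp [hk]
  rw [hrw1, hrw2, hsplitfun, integral_add hgfsum_int hGVsum_int, hIGV]
  ring
end

section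
/- State-dependent error version of the rollout bound: let π be a stationary policy proper from x, let V* be bounded with V*(t) = 0 and V* = T V*, and suppose there is a nonnegative measurable function e : X → [0,∞) such that, for every k ≥ 0, E[ f(x_k, π(x_k)) + V*(x_{k+1}) | x_k ] ≤ V*(x_k) + e(x_k) along the closed-loop trajectory. Then J^π(x) − V*(x) ≤ E[ Σ_{k=0}^{τ−1} e(x_k) ]. -/
open MeasureTheory ProbabilityTheory Filter
open scoped ENNReal

section Aux
variable {X U W Ω : Type*}

lemma traj_prefix (F : X → U → W → X) (π : X → U) (x : X) :
    ∀ (k : ℕ) (ω ω' : ℕ → W), (∀ i < k, ω i = ω' i) → traj F π x ω k = traj F π x ω' k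
  | 0, _, _, _ => rfl
  | k+1, ω, ω', h => by
    have ih := traj_prefix F π x k ω ω' (fun i hi => h i (Nat.lt_succ_of_lt hi))
    simp only [traj, ih, h k (Nat.lt_succ_self k)]

def trajFin (F : X → U → W → X) (π : X → U) (x : X) (w₀ : W) (k : ℕ)
    (v : Fin k → W) : X :=
  traj F π x (fun i => if h : i < k then v ⟨i, h⟩ else w₀) k

lemma trajFin_succ (F : X → U → W → X) (π : X → U) (x : X) (w₀ : W) (k : ℕ)
    (v : Fin (k+1) → W) :
    trajFin F π x w₀ (k+1) v =
      F (trajFin F π x w₀ k (Fin.init v)) (π (trajFin F π x w₀ k (Fin.init v)))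
        (v (Fin.last k)) := by
  unfold trajFin
  have h1 : traj F π x (fun i => if h : i < k+1 then v ⟨i, h⟩ else w₀) k
      = traj F π x (fun i => if h : i < k then Fin.init v ⟨i, h⟩ else w₀) k := by
    apply traj_prefix
    intro i hi
    rw [dif_pos (Nat.lt_succ_of_lt hi), dif_pos hi]
    simp [Fin.init, Fin.castSucc, Fin.castAdd, Fin.castLE]
  simp only [traj, h1]
  congr 1
  rw [dif_pos (Nat.lt_succ_self k)]
  rfl

lemma trajOn_eq_trajFin (F : X → U → W → X) (π : X → U) (x : X) (w₀ : W)
    (ξ : ℕ → Ω → W) (k : ℕ) (ω : Ω) :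
    trajOn F π x ξ k ω = trajFin F π x w₀ k (fun i => ξ i ω) := by
  unfold trajOn trajFin
  apply traj_prefix
  intro i hi
  rw [dif_pos hi]

variable [MeasurableSpace X] [MeasurableSpace U] [MeasurableSpace W] [MeasurableSpace Ω]

lemma trajFin_measurable (F : X → U → W → X) (π : X → U) (x : X) (w₀ : W)
    (hF : Measurable fun p : X × U × W => F p.1 p.2.1 p.2.2) (hπ : Measurable π) :
    ∀ k, Measurable (trajFin F π x w₀ k)
  | 0 => measurable_const
  | k+1 => by
    have ih := trajFin_measurable F π x w₀ hF hπ k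
    have hinit : Measurable fun v : Fin (k+1) → W => Fin.init v :=
      measurable_pi_lambda _ fun i => measurable_pi_apply i.castSucc
    have : Measurable fun v : Fin (k+1) → W =>
        (trajFin F π x w₀ k (Fin.init v), (π (trajFin F π x w₀ k (Fin.init v)), v (Fin.last k))) :=
      (ih.comp hinit).prodMk ((hπ.comp (ih.comp hinit)).prodMk (measurable_pi_apply _))
    have h2 := hF.comp this
    have h3 : (fun v : Fin (k+1) → W => trajFin F π x w₀ (k+1) v)
        = ((fun p : X × U × W => F p.1 p.2.1 p.2.2) ∘ fun v =>
          (trajFin F π x w₀ k (Fin.init v), (π (trajFin F π x w₀ k (Fin.init v)), v (Fin.last k)))) := by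
      funext v; exact trajFin_succ F π x w₀ k v
    show Measurable fun v : Fin (k+1) → W => trajFin F π x w₀ (k+1) v
    rw [h3]; exact h2

lemma trajOn_measurable (F : X → U → W → X) (π : X → U) (x : X)
    (hF : Measurable fun p : X × U × W => F p.1 p.2.1 p.2.2) (hπ : Measurable π)
    (ξ : ℕ → Ω → W) (hξ : ∀ k, Measurable (ξ k)) :
    ∀ k, Measurable (trajOn F π x ξ k)
  | 0 => measurable_const
  | k+1 => by
    have ih := trajOn_measurable F π x hF hπ ξ hξ k
    exact hF.comp (ih.prodMk ((hπ.comp ih).prodMk (hξ k)))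

end Aux

section Aux2
variable {X U W Ω : Type*} [MeasurableSpace X] [MeasurableSpace U] [MeasurableSpace W]
  [MeasurableSpace Ω]

lemma trajOn_indep (F : X → U → W → X) (π : X → U) (x : X)
    (hF : Measurable fun p : X × U × W => F p.1 p.2.1 p.2.2) (hπ : Measurable π)
    (P : Measure Ω) (ξ : ℕ → Ω → W) (hξ : ∀ k, Measurable (ξ k))
    (hind : iIndepFun ξ P) (w₀ : W) (k : ℕ) :
    IndepFun (trajOn F π x ξ k) (ξ k) P := by
  have hdisj : Disjoint (Finset.range k) ({k} : Finset ℕ) := by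
    simp [Finset.disjoint_singleton_right]
  have h := hind.indepFun_finset (Finset.range k) {k} hdisj hξ
  have hφ : Measurable fun v : ↥(Finset.range k) → W =>
      trajFin F π x w₀ k (fun j : Fin k => v ⟨(j : ℕ), Finset.mem_range.2 j.isLt⟩) :=
    (trajFin_measurable F π x w₀ hF hπ k).comp
      (measurable_pi_lambda _ fun j => measurable_pi_apply _)
  have hψ : Measurable fun v : ↥({k} : Finset ℕ) → W =>
      v ⟨k, Finset.mem_singleton_self k⟩ := measurable_pi_apply _
  have h2 := h.comp hφ hψ
  have e1 : (fun v : ↥(Finset.range k) → W =>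
      trajFin F π x w₀ k (fun j : Fin k => v ⟨(j : ℕ), Finset.mem_range.2 j.isLt⟩))
        ∘ (fun a (i : ↥(Finset.range k)) => ξ i a) = trajOn F π x ξ k := by
    funext ω
    simp only [Function.comp_apply]
    exact (trajOn_eq_trajFin F π x w₀ ξ k ω).symm
  have e2 : (fun v : ↥({k} : Finset ℕ) → W => v ⟨k, Finset.mem_singleton_self k⟩)
      ∘ (fun a (i : ↥({k} : Finset ℕ)) => ξ i a) = ξ k := rfl
  rwa [e1, e2] at h2

lemma indep_integral_swap (P : Measure Ω) [IsProbabilityMeasure P]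
    (μ : Measure W) [IsProbabilityMeasure μ]
    (Yk : Ω → X) (ξk : Ω → W) (hY : Measurable Yk) (hξ : Measurable ξk)
    (hlaw : P.map ξk = μ) (hind : IndepFun Yk ξk P)
    (g : X → W → ℝ) (hg : Measurable fun p : X × W => g p.1 p.2)
    (C : ℝ) (hb : ∀ y w, |g y w| ≤ C) :
    ∫ ω, g (Yk ω) (ξk ω) ∂P = ∫ ω, ∫ w, g (Yk ω) w ∂μ ∂P := by
  have hjoint : P.map (fun ω => (Yk ω, ξk ω)) = (P.map Yk).prod (P.map ξk) :=
    (indepFun_iff_map_prod_eq_prod_map_map hY.aemeasurable hξ.aemeasurable).1 hind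
  have hmapY : IsProbabilityMeasure (P.map Yk) := Measure.isProbabilityMeasure_map hY.aemeasurable
  have hint : Integrable (fun p : X × W => g p.1 p.2) ((P.map Yk).prod μ) := by
    refine Integrable.mono' (integrable_const C) hg.aestronglyMeasurable ?_
    exact Filter.Eventually.of_forall fun p => by simpa [Real.norm_eq_abs] using hb p.1 p.2
  calc ∫ ω, g (Yk ω) (ξk ω) ∂P
      = ∫ p : X × W, g p.1 p.2 ∂(P.map (fun ω => (Yk ω, ξk ω))) := by
        rw [integral_map (hY.aemeasurable.prodMk hξ.aemeasurable) hg.aestronglyMeasurable]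
    _ = ∫ p : X × W, g p.1 p.2 ∂((P.map Yk).prod μ) := by rw [hjoint, hlaw]
    _ = ∫ y, ∫ w, g y w ∂μ ∂(P.map Yk) := MeasureTheory.integral_prod _ hint
    _ = ∫ ω, ∫ w, g (Yk ω) w ∂μ ∂P := by
        rw [integral_map hY.aemeasurable]
        exact (hg.stronglyMeasurable.integral_prod_right').aestronglyMeasurable

end Aux2

/-- State-dependent error version of the rollout bound: if the one-step inequality
`f(x', π(x')) + ∫ V*(F(x', π(x'), w)) dμ(w) ≤ V*(x') + e(x')` holds (with `e ≥ 0`) at every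
nonterminal state visited by the closed loop of a proper policy `π`, then
`J^π(x) - V*(x) ≤ E[ Σ_{k=0}^{τ-1} e(x_k) ]`, stated in `EReal`. -/
theorem rollout_bound_state_dependent_error
    {X U W Ω : Type*} [MeasurableSpace X] [MeasurableSingletonClass X]
    [MeasurableSpace U] [MeasurableSpace W] [MeasurableSpace Ω]
    (μ : Measure W) [IsProbabilityMeasure μ] (P : Measure Ω) [IsProbabilityMeasure P]
    (t : X) (u0 : U) (Ua : X → Set U) (F : X → U → W → X) (f : X → U → ℝ)
    -- SSP model: nonempty control sets, nonnegative measurable stage cost, measurable dynamics,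
    -- absorbing cost-free terminal state
    (hUne : ∀ y, (Ua y).Nonempty) (hfnn : ∀ y u, 0 ≤ f y u)
    (hFmeas : Measurable fun p : X × U × W => F p.1 p.2.1 p.2.2)
    (hfmeas : Measurable fun p : X × U => f p.1 p.2)
    (hUt : Ua t = {u0}) (hft : f t u0 = 0) (hFt : ∀ w, F t u0 w = t)
    -- V* : bounded measurable, V*(t)=0, Bellman fixed point, well-defined one-step integrals
    (Vstar : X → ℝ) (hVsmeas : Measurable Vstar) (hVsbdd : ∃ C, ∀ y, |Vstar y| ≤ C)
    (hVst : Vstar t = 0) (hVsfix : ∀ y, Vstar y = bellman μ t Ua f F Vstar y)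
    (hVsint : ∀ y u, Integrable (fun w => Vstar (F y u w)) μ)
    (π : X → U) (hπmeas : Measurable π) (hπt : π t = u0)
    -- i.i.d. disturbance sequence with common law μ on an abstract probability space
    (ξ : ℕ → Ω → W) (hξmeas : ∀ k, Measurable (ξ k))
    (hξindep : iIndepFun ξ P)
    (hξlaw : ∀ k, P.map (ξ k) = μ)
    -- properness of the closed loop from x: τ < ∞ a.s. and J(x) < ∞
    (x : X)
    (hproper_tau : ∀ᵐ ω ∂P, hitTime t (trajOn F π x ξ) ω < ⊤)
    (hproper_J : totalCost P t f π (trajOn F π x ξ) < ⊤)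
    (e : X → ℝ) (he0 : ∀ y, 0 ≤ e y) (hemeas : Measurable e)
    (honestep : ∀ ω k, trajOn F π x ξ k ω ≠ t →
      f (trajOn F π x ξ k ω) (π (trajOn F π x ξ k ω))
        + ∫ w, Vstar (F (trajOn F π x ξ k ω) (π (trajOn F π x ξ k ω)) w) ∂μ
        ≤ Vstar (trajOn F π x ξ k ω) + e (trajOn F π x ξ k ω)) :
    (totalCost P t f π (trajOn F π x ξ) : EReal)
      ≤ (Vstar x : EReal) +
        ((∫⁻ ω, ∑' (k : ℕ), (if (k : ℝ≥0∞) < hitTime t (trajOn F π x ξ) ω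
            then ENNReal.ofReal (e (trajOn F π x ξ k ω)) else 0) ∂P : ℝ≥0∞) : EReal) := by
  classical
  obtain ⟨C₀, hC₀⟩ := hVsbdd
  set C : ℝ := max C₀ 0 with hCdef
  have hCbd : ∀ y, |Vstar y| ≤ C := fun y => (hC₀ y).trans (le_max_left _ _)
  have hC0 : (0 : ℝ) ≤ C := le_max_right _ _
  have hWne : Nonempty W := by
    by_contra h
    rw [not_nonempty_iff] at h
    have h1 : μ Set.univ = 1 := measure_univ
    rw [Set.univ_eq_empty_iff.2 h] at h1
    simp at h1
  obtain ⟨w₀⟩ := hWne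
  set Y : ℕ → Ω → X := trajOn F π x ξ with hYdef
  have hYmeas : ∀ k, Measurable (Y k) := trajOn_measurable F π x hFmeas hπmeas ξ hξmeas
  have hYsucc : ∀ k ω, Y (k+1) ω = F (Y k ω) (π (Y k ω)) (ξ k ω) := fun k ω => rfl
  have hY0 : ∀ ω, Y 0 ω = x := fun ω => rfl
  have habs : ∀ ω k n, k ≤ n → Y k ω = t → Y n ω = t := by
    intro ω k n hkn hk
    induction n, hkn using Nat.le_induction with
    | base => exact hk
    | succ n hn ih => rw [hYsucc, ih, hπt, hFt]
  have hlt : ∀ (ω : Ω) (k : ℕ), ((k : ℝ≥0∞) < hitTime t Y ω ↔ Y k ω ≠ t) := by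
    intro ω k
    constructor
    · intro h hkt
      exact absurd (iInf₂_le (f := fun j (_ : Y j ω = t) => (j : ℝ≥0∞)) k hkt) (not_le.2 h)
    · intro hkt
      have h1 : ((k : ℝ≥0∞) + 1) ≤ hitTime t Y ω := by
        refine le_iInf₂ fun j hj => ?_
        have hkj : k < j := by
          by_contra hne
          exact hkt (habs ω j k (not_lt.1 hne) hj)
        calc ((k : ℝ≥0∞) + 1) = ((k + 1 : ℕ) : ℝ≥0∞) := by push_cast; ring
          _ ≤ (j : ℝ≥0∞) := by exact_mod_cast hkj
      exact lt_of_lt_of_le (ENNReal.lt_add_right (by simp) one_ne_zero) h1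
  -- rewrite the two lintegrals
  have hfterm : ∀ (ω : Ω) (k : ℕ), (if (k : ℝ≥0∞) < hitTime t Y ω
      then ENNReal.ofReal (f (Y k ω) (π (Y k ω))) else 0)
      = ENNReal.ofReal (f (Y k ω) (π (Y k ω))) := by
    intro ω k
    by_cases h : Y k ω = t
    · have hn : ¬ ((k : ℝ≥0∞) < hitTime t Y ω) := fun hc => (hlt ω k).1 hc h
      rw [if_neg hn, h, hπt, hft, ENNReal.ofReal_zero]
    · rw [if_pos ((hlt ω k).2 h)]
  set ek : ℕ → Ω → ℝ := fun k ω => if Y k ω = t then 0 else e (Y k ω) with hekdef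
  have hek0 : ∀ k ω, 0 ≤ ek k ω := by
    intro k ω; by_cases h : Y k ω = t <;> simp [hekdef, h, he0]
  have hekmeas : ∀ k, Measurable (ek k) := by
    intro k
    exact Measurable.ite ((hYmeas k) (measurableSet_singleton t)) measurable_const
      (hemeas.comp (hYmeas k))
  have heterm : ∀ (ω : Ω) (k : ℕ), (if (k : ℝ≥0∞) < hitTime t Y ω
      then ENNReal.ofReal (e (Y k ω)) else 0) = ENNReal.ofReal (ek k ω) := by
    intro ω k
    by_cases h : Y k ω = t
    · have hn : ¬ ((k : ℝ≥0∞) < hitTime t Y ω) := fun hc => (hlt ω k).1 hc h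
      simp [hn, hekdef, h]
    · simp [(hlt ω k).2 h, hekdef, h]
  have hfYmeas : ∀ k, Measurable fun ω => f (Y k ω) (π (Y k ω)) := fun k =>
    hfmeas.comp ((hYmeas k).prodMk (hπmeas.comp (hYmeas k)))
  have hAeq : totalCost P t f π Y = ∑' k, ∫⁻ ω, ENNReal.ofReal (f (Y k ω) (π (Y k ω))) ∂P := by
    unfold totalCost
    rw [show (fun ω => ∑' (k : ℕ), (if (k : ℝ≥0∞) < hitTime t Y ω
        then ENNReal.ofReal (f (Y k ω) (π (Y k ω))) else 0))
        = fun ω => ∑' (k : ℕ), ENNReal.ofReal (f (Y k ω) (π (Y k ω))) by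
      funext ω; exact tsum_congr fun k => hfterm ω k]
    exact lintegral_tsum fun k => (ENNReal.measurable_ofReal.comp (hfYmeas k)).aemeasurable
  set B : ℝ≥0∞ := ∫⁻ ω, ∑' (k : ℕ), (if (k : ℝ≥0∞) < hitTime t Y ω
      then ENNReal.ofReal (e (Y k ω)) else 0) ∂P with hBdef
  have hBeq : B = ∑' k, ∫⁻ ω, ENNReal.ofReal (ek k ω) ∂P := by
    rw [hBdef]
    rw [show (fun ω => ∑' (k : ℕ), (if (k : ℝ≥0∞) < hitTime t Y ω
        then ENNReal.ofReal (e (Y k ω)) else 0))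
        = fun ω => ∑' (k : ℕ), ENNReal.ofReal (ek k ω) by
      funext ω; exact tsum_congr fun k => heterm ω k]
    exact lintegral_tsum fun k => (ENNReal.measurable_ofReal.comp (hekmeas k)).aemeasurable
  by_cases hBtop : B = ⊤
  · rw [hBtop, EReal.coe_ennreal_top, EReal.add_top_of_ne_bot (by simp)]
    exact le_top
  -- main case : B finite
  set G : X → ℝ := fun y => ∫ w, Vstar (F y (π y) w) ∂μ with hGdef
  have hgm : Measurable fun p : X × W => Vstar (F p.1 (π p.1) p.2) :=
    hVsmeas.comp (hFmeas.comp (measurable_fst.prodMk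
      ((hπmeas.comp measurable_fst).prodMk measurable_snd)))
  have hGmeas : StronglyMeasurable G := hgm.stronglyMeasurable.integral_prod_right'
  have hGbd : ∀ y, |G y| ≤ C := by
    intro y
    rw [← Real.norm_eq_abs]
    have := norm_integral_le_of_norm_le_const (μ := μ)
      (f := fun w => Vstar (F y (π y) w)) (C := C)
      (Filter.Eventually.of_forall fun w => by rw [Real.norm_eq_abs]; exact hCbd _)
    simpa using this
  have hIVint : ∀ k, Integrable (fun ω => G (Y k ω)) P := by
    intro k
    refine Integrable.mono' (integrable_const C)
      ((hGmeas.measurable.comp (hYmeas k)).aestronglyMeasurable) ?_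
    exact Filter.Eventually.of_forall fun ω => by
      rw [Real.norm_eq_abs]; exact hGbd _
  have hVYint : ∀ k, Integrable (fun ω => Vstar (Y k ω)) P := by
    intro k
    refine Integrable.mono' (integrable_const C)
      ((hVsmeas.comp (hYmeas k)).aestronglyMeasurable) ?_
    exact Filter.Eventually.of_forall fun ω => by
      rw [Real.norm_eq_abs]; exact hCbd _
  have hekint : ∀ k, Integrable (ek k) P := by
    intro k
    refine ⟨(hekmeas k).aestronglyMeasurable, ?_⟩
    rw [hasFiniteIntegral_iff_ofReal (Filter.Eventually.of_forall (hek0 k))]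
    refine lt_of_le_of_lt ?_ (lt_top_iff_ne_top.2 hBtop)
    rw [hBeq]
    exact ENNReal.le_tsum k
  have hstep_pt : ∀ k ω, f (Y k ω) (π (Y k ω)) + G (Y k ω) ≤ Vstar (Y k ω) + ek k ω := by
    intro k ω
    by_cases h : Y k ω = t
    · simp only [hekdef, h, if_pos, hπt, hft, hVst]
      simp [hGdef, h, hπt, hFt, hVst]
    · have := honestep ω k h
      simp only [hekdef, if_neg h]
      exact this
  have hfint : ∀ k, Integrable (fun ω => f (Y k ω) (π (Y k ω))) P := by
    intro k
    refine Integrable.mono' (((hVYint k).add (hekint k)).sub (hIVint k))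
      ((hfYmeas k).aestronglyMeasurable) ?_
    refine Filter.Eventually.of_forall fun ω => ?_
    rw [Real.norm_eq_abs, abs_of_nonneg (hfnn _ _)]
    have := hstep_pt k ω
    simp only [Pi.sub_apply, Pi.add_apply]
    linarith
  set a : ℕ → ℝ := fun k => ∫ ω, f (Y k ω) (π (Y k ω)) ∂P with hadef
  set b : ℕ → ℝ := fun k => ∫ ω, Vstar (Y k ω) ∂P with hbdef
  set c : ℕ → ℝ := fun k => ∫ ω, ek k ω ∂P with hcdef
  have ha0 : ∀ k, 0 ≤ a k := fun k => integral_nonneg fun ω => hfnn _ _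
  have hc0 : ∀ k, 0 ≤ c k := fun k => integral_nonneg (hek0 k)
  have hswap : ∀ k, ∫ ω, G (Y k ω) ∂P = b (k+1) := by
    intro k
    have h := indep_integral_swap P μ (Y k) (ξ k) (hYmeas k) (hξmeas k) (hξlaw k)
      (trajOn_indep F π x hFmeas hπmeas P ξ hξmeas hξindep w₀ k)
      (fun y w => Vstar (F y (π y) w)) hgm C (fun y w => hCbd _)
    show ∫ ω, G (Y k ω) ∂P = ∫ ω, Vstar (Y (k+1) ω) ∂P
    rw [show (fun ω => Vstar (Y (k+1) ω)) = fun ω => Vstar (F (Y k ω) (π (Y k ω)) (ξ k ω)) by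
      funext ω; rw [hYsucc]]
    exact h.symm
  have hab : ∀ k, a k + b (k+1) ≤ b k + c k := by
    intro k
    rw [← hswap k, hadef, hbdef, hcdef]
    rw [← integral_add (hfint k) (hIVint k), ← integral_add (hVYint k) (hekint k)]
    exact integral_mono ((hfint k).add (hIVint k)) ((hVYint k).add (hekint k))
      fun ω => hstep_pt k ω
  have hb0 : b 0 = Vstar x := by
    rw [hbdef]
    simp only [hY0]
    simp
  have htel : ∀ n, (∑ k ∈ Finset.range n, a k) + b n ≤ Vstar x + ∑ k ∈ Finset.range n, c k := by
    intro n
    induction n with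
    | zero => simp [hb0]
    | succ n ih =>
      rw [Finset.sum_range_succ, Finset.sum_range_succ]
      have := hab n
      linarith
  -- b n tends to 0
  have hbtend : Filter.Tendsto b atTop (nhds 0) := by
    have h0 : (0 : ℝ) = ∫ ω, (0 : ℝ) ∂P := by simp
    rw [hbdef, h0]
    apply tendsto_integral_of_dominated_convergence (fun _ => C)
    · exact fun n => (hVsmeas.comp (hYmeas n)).aestronglyMeasurable
    · exact integrable_const C
    · exact fun n => Filter.Eventually.of_forall fun ω => by
        rw [Real.norm_eq_abs]; exact hCbd _
    · filter_upwards [hproper_tau] with ω hω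
      have hex : ∃ k, Y k ω = t := by
        by_contra hno
        push_neg at hno
        have : hitTime t Y ω = ⊤ := by
          unfold hitTime
          simp [hno]
        rw [this] at hω
        exact absurd hω (lt_irrefl _)
      obtain ⟨k, hk⟩ := hex
      refine Filter.Tendsto.congr' ?_ (tendsto_const_nhds : Filter.Tendsto (fun _ : ℕ => (0:ℝ)) atTop (nhds 0))
      filter_upwards [Filter.eventually_ge_atTop k] with n hn
      rw [habs ω k n hn hk, hVst]
  -- bound on partial sums of c
  have hofc : ∀ k, ENNReal.ofReal (c k) = ∫⁻ ω, ENNReal.ofReal (ek k ω) ∂P := fun k =>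
    ofReal_integral_eq_lintegral_ofReal (hekint k) (Filter.Eventually.of_forall (hek0 k))
  have hcB : ∀ n, (∑ k ∈ Finset.range n, c k) ≤ B.toReal := by
    intro n
    rw [← ENNReal.ofReal_le_iff_le_toReal hBtop]
    rw [ENNReal.ofReal_sum_of_nonneg (fun k _ => hc0 k)]
    rw [hBeq]
    calc (∑ k ∈ Finset.range n, ENNReal.ofReal (c k))
        = ∑ k ∈ Finset.range n, ∫⁻ ω, ENNReal.ofReal (ek k ω) ∂P :=
          Finset.sum_congr rfl fun k _ => hofc k
      _ ≤ ∑' k, ∫⁻ ω, ENNReal.ofReal (ek k ω) ∂P := ENNReal.sum_le_tsum _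
  -- A as a sup of partial sums of a
  have hofa : ∀ k, ENNReal.ofReal (a k) = ∫⁻ ω, ENNReal.ofReal (f (Y k ω) (π (Y k ω))) ∂P :=
    fun k => ofReal_integral_eq_lintegral_ofReal (hfint k)
      (Filter.Eventually.of_forall fun ω => hfnn _ _)
  set S : ℕ → ℝ := fun n => ∑ k ∈ Finset.range n, a k with hSdef
  have hAeq2 : totalCost P t f π Y = ⨆ n, ENNReal.ofReal (S n) := by
    rw [hAeq, ENNReal.tsum_eq_iSup_nat]
    congr 1
    funext n
    rw [hSdef, ENNReal.ofReal_sum_of_nonneg (fun k _ => ha0 k)]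
    exact (Finset.sum_congr rfl fun k _ => (hofa k)).symm
  have hAne : totalCost P t f π Y ≠ ⊤ := hproper_J.ne
  have hSbd : ∀ n, S n ≤ (totalCost P t f π Y).toReal := by
    intro n
    rw [← ENNReal.ofReal_le_iff_le_toReal hAne, hAeq2]
    exact le_iSup (fun n => ENNReal.ofReal (S n)) n
  have hSmono : Monotone S := by
    intro m n hmn
    exact Finset.sum_le_sum_of_subset_of_nonneg (Finset.range_subset_range.2 hmn)
      (fun k _ _ => ha0 k)
  set Sl : ℝ := ⨆ n, S n with hSldef
  have hbdd : BddAbove (Set.range S) := ⟨(totalCost P t f π Y).toReal, by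
    rintro _ ⟨n, rfl⟩; exact hSbd n⟩
  have htendS : Filter.Tendsto S atTop (nhds Sl) := tendsto_atTop_ciSup hSmono hbdd
  have hSr : ∀ n, S n ≤ Vstar x - b n + B.toReal := by
    intro n
    have h1 := htel n
    have h2 := hcB n
    rw [hSdef]
    linarith
  have hrtend : Filter.Tendsto (fun n => Vstar x - b n + B.toReal) atTop
      (nhds (Vstar x + B.toReal)) := by
    have : Filter.Tendsto (fun n => Vstar x - b n) atTop (nhds (Vstar x - 0)) :=
      Filter.Tendsto.const_sub _ hbtend
    rw [sub_zero] at this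
    simpa using this.add_const B.toReal
  have hSlle : Sl ≤ Vstar x + B.toReal := le_of_tendsto_of_tendsto' htendS hrtend hSr
  have hSl0 : 0 ≤ Sl := le_trans (by simp [hSdef]) (le_ciSup hbdd 0)
  have hAle : totalCost P t f π Y ≤ ENNReal.ofReal Sl := by
    rw [hAeq2]
    exact iSup_le fun n => ENNReal.ofReal_le_ofReal (le_ciSup hbdd n)
  -- conclude in EReal
  have h1 : (totalCost P t f π Y : EReal) ≤ ((Sl : ℝ) : EReal) := by
    refine le_trans (EReal.coe_ennreal_le_coe_ennreal_iff.2 hAle) ?_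
    rw [EReal.coe_ennreal_ofReal, max_eq_left hSl0]
  have h2 : ((Sl : ℝ) : EReal) ≤ ((Vstar x + B.toReal : ℝ) : EReal) :=
    EReal.coe_le_coe_iff.2 hSlle
  have h3 : ((Vstar x + B.toReal : ℝ) : EReal) = (Vstar x : EReal) + (B : EReal) := by
    rw [EReal.coe_add]
    congr 1
    rw [← ENNReal.ofReal_toReal hBtop, EReal.coe_ennreal_ofReal,
      max_eq_left ENNReal.toReal_nonneg, ENNReal.toReal_ofReal ENNReal.toReal_nonneg]
  exact le_trans h1 (le_trans h2 (le_of_eq h3))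
end
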